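/- Let p be a prime, k an integer with k ≥ 2, and let χ and ψ be Dirichlet characters with χ(p) = 1. Define e_n = Σ_{m | n} χ(n/m)·ψ(m)·m^{k-1}. Then for all integers ℓ, r ≥ 1, p^r divides e_{ℓp^r} − e_{ℓp^{r-1}} (as algebraic integers, i.e. the difference lies in p^r times the ring of integers of the cyclotomic field containing the character values). -/

import Mathlib

open Finset

lemma dirichlet_char_isIntegral {N : ℕ} (χ : DirichletCharacter ℂ N) (a : ZMod N) :
    IsIntegral ℤ (χ a) := by
  by_cases h : IsUnit a
  · obtain ⟨u, rfl⟩ := h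
    have he : 0 < orderOf u := orderOf_pos u
    have : (χ (u : ZMod N)) ^ (orderOf u) = 1 := by
      rw [← map_pow, ← Units.val_pow_eq_pow_val, pow_orderOf_eq_one, Units.val_one, map_one]
    exact IsIntegral.of_pow he (this ▸ isIntegral_one)
  · rw [χ.map_nonunit h]; exact isIntegral_zero

/-- when `χ(p) = 1`, the Eisenstein coefficients satisfy
`e_{ℓp^r} ≡ e_{ℓp^{r-1}} mod p^r` as algebraic integers: the difference is
`p^r` times an algebraic integer. -/
theorem eisenstein_coeff_congruence {N M : ℕ} (p : ℕ) (hp : p.Prime) (k : ℕ) (hk : 2 ≤ k)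
    (χ : DirichletCharacter ℂ N) (ψ : DirichletCharacter ℂ M)
    (hχp : χ ((p : ℕ) : ZMod N) = 1)
    (e : ℕ → ℂ)
    (he : ∀ n : ℕ, e n = ∑ m ∈ n.divisors, χ ((n / m : ℕ) : ZMod N) * ψ ((m : ℕ) : ZMod M) *
      (m : ℂ) ^ (k - 1))
    (ℓ : ℕ) (hℓ : 1 ≤ ℓ) (r : ℕ) (hr : 1 ≤ r) :
    ∃ z : ℂ, IsIntegral ℤ z ∧ e (ℓ * p ^ r) - e (ℓ * p ^ (r - 1)) = (p : ℂ) ^ r * z := by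
  have hp0 : p ≠ 0 := hp.ne_zero
  set n' : ℕ := ℓ * p ^ (r - 1) with hn'def
  set n : ℕ := ℓ * p ^ r with hndef
  have hℓ0 : ℓ ≠ 0 := by omega
  have hn0 : n ≠ 0 := by positivity
  have hn'0 : n' ≠ 0 := by positivity
  have hnn' : n = p * n' := by
    rw [hndef, hn'def]
    have : p ^ r = p * p ^ (r - 1) := by
      rw [← pow_succ']
      congr 1
      omega
    rw [this]; ring
  have hdvd : n' ∣ n := ⟨p, by rw [hnn']; ring⟩
  have hsub : n'.divisors ⊆ n.divisors := Nat.divisors_subset_of_dvd hn0 hdvd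
  -- common terms agree
  have hcommon : ∀ m ∈ n'.divisors,
      χ ((n / m : ℕ) : ZMod N) * ψ ((m : ℕ) : ZMod M) * (m : ℂ) ^ (k - 1)
      = χ ((n' / m : ℕ) : ZMod N) * ψ ((m : ℕ) : ZMod M) * (m : ℂ) ^ (k - 1) := by
    intro m hm
    have hmd : m ∣ n' := (Nat.mem_divisors.mp hm).1
    have : n / m = p * (n' / m) := by
      rw [hnn', Nat.mul_div_assoc p hmd]
    rw [this, Nat.cast_mul, map_mul, hχp, one_mul]
  -- each new divisor is divisible by p^r
  have hkey : ∀ m ∈ n.divisors \ n'.divisors, p ^ r ∣ m := by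
    intro m hm
    rw [Finset.mem_sdiff] at hm
    obtain ⟨hmn, hmn'⟩ := hm
    have hmd : m ∣ n := (Nat.mem_divisors.mp hmn).1
    have hm0 : m ≠ 0 := by
      rintro rfl; exact hn0 (Nat.zero_dvd.mp hmd)
    have hmd' : ¬ m ∣ n' := fun h => hmn' (Nat.mem_divisors.mpr ⟨h, hn'0⟩)
    rw [← Nat.factorization_le_iff_dvd hm0 hn'0] at hmd'
    rw [Finsupp.le_iff] at hmd'
    push_neg at hmd'
    obtain ⟨q, hq, hlt⟩ := hmd'
    have hle : m.factorization ≤ n.factorization :=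
      (Nat.factorization_le_iff_dvd hm0 hn0).mpr hmd
    have hleq := hle q
    have hfac : n.factorization = ℓ.factorization + (p ^ r).factorization := by
      rw [hndef, Nat.factorization_mul hℓ0 (by positivity)]
    have hfac' : n'.factorization = ℓ.factorization + (p ^ (r - 1)).factorization := by
      rw [hn'def, Nat.factorization_mul hℓ0 (by positivity)]
    by_cases hqp : q = p
    · subst hqp
      have hq1 : n.factorization q = ℓ.factorization q + r := by
        rw [hfac]; simp [Nat.factorization_pow, hp.factorization]
      have hq2 : n'.factorization q = ℓ.factorization q + (r - 1) := by
        rw [hfac']; simp [Nat.factorization_pow, hp.factorization]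
      have : r ≤ m.factorization q := by omega
      calc q ^ r ∣ q ^ (m.factorization q) := pow_dvd_pow q this
        _ ∣ m := Nat.ordProj_dvd m q
    · have hq1 : n.factorization q = ℓ.factorization q := by
        rw [hfac]; simp [Nat.factorization_pow, hp.factorization,
          Finsupp.single_apply, Ne.symm hqp]
      have hq2 : n'.factorization q = ℓ.factorization q := by
        rw [hfac']; simp [Nat.factorization_pow, hp.factorization,
          Finsupp.single_apply, Ne.symm hqp]
      omega
  -- split the sum
  rw [he n, he n', ← Finset.sum_congr rfl hcommon,
    ← Finset.sum_sdiff hsub (f := fun m => χ ((n / m : ℕ) : ZMod N) *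
      ψ ((m : ℕ) : ZMod M) * (m : ℂ) ^ (k - 1)), add_sub_cancel_right]
  refine ⟨∑ m ∈ n.divisors \ n'.divisors,
    χ ((n / m : ℕ) : ZMod N) * ψ ((m : ℕ) : ZMod M) * ((m ^ (k - 1) / p ^ r : ℕ) : ℂ), ?_, ?_⟩
  · refine IsIntegral.sum _ fun m _ => ?_
    refine (((dirichlet_char_isIntegral χ _).mul (dirichlet_char_isIntegral ψ _)).mul ?_)
    have : ((m ^ (k - 1) / p ^ r : ℕ) : ℂ) = algebraMap ℤ ℂ ((m ^ (k - 1) / p ^ r : ℕ) : ℤ) := by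
      rw [algebraMap_int_eq, eq_intCast, Int.cast_natCast]
    rw [this]
    exact isIntegral_algebraMap
  · rw [Finset.mul_sum]
    refine Finset.sum_congr rfl fun m hm => ?_
    have hpm : p ^ r ∣ m ^ (k - 1) := by
      have h1 : p ^ r ∣ m := hkey m hm
      calc p ^ r ∣ m := h1
        _ ∣ m ^ (k - 1) := dvd_pow_self m (by omega)
    have : ((m : ℂ)) ^ (k - 1) = (p : ℂ) ^ r * ((m ^ (k - 1) / p ^ r : ℕ) : ℂ) := by
      have := Nat.div_mul_cancel hpm
      calc ((m : ℂ)) ^ (k - 1) = ((m ^ (k - 1) : ℕ) : ℂ) := by push_cast; ring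
        _ = (((m ^ (k - 1) / p ^ r) * p ^ r : ℕ) : ℂ) := by rw [this]
        _ = (p : ℂ) ^ r * ((m ^ (k - 1) / p ^ r : ℕ) : ℂ) := by push_cast; ring
    rw [this]; ring
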